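/- Fix X ∈ ℝ^{n×k} and y ∈ ℝ^n, and let U be the set of matrices Δ ∈ ℝ^{n×k} whose entrywise ℓ1-norm (sum of absolute values of all entries) is at most ρ > 0. Then for every β ∈ ℝ^k, ∫_U ‖y − (X + Δ)β‖_2^2 dΔ = ((2ρ)^{nk}/(nk)!) · (‖y − Xβ‖_2^2 + (2nρ^2/((nk+1)(nk+2)))·‖β‖_2^2). Consequently, minimizing the averaged squared residual over U is equivalent to ridge regression with penalty λ = 2nρ^2/((nk+1)(nk+2)). -/

import Mathlib

open MeasureTheory

noncomputable section

def Sball (N : ℕ) (ρ : ℝ) : Set (Fin N → ℝ) := {x | ∑ i, |x i| ≤ ρ}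

lemma Sball_closed (N : ℕ) (ρ : ℝ) : IsClosed (Sball N ρ) := by
  have : Continuous fun x : Fin N → ℝ => ∑ i, |x i| := by fun_prop
  exact isClosed_le this continuous_const

lemma Sball_meas (N : ℕ) (ρ : ℝ) : MeasurableSet (Sball N ρ) :=
  (Sball_closed N ρ).measurableSet

lemma Sball_compact (N : ℕ) (ρ : ℝ) : IsCompact (Sball N ρ) := by
  have hb : Sball N ρ ⊆ Metric.closedBall 0 ρ := by
    intro x hx
    simp only [Metric.mem_closedBall, dist_zero_right]
    refine (pi_norm_le_iff_of_nonneg ?_).2 fun i => ?_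
    · exact le_trans (Finset.sum_nonneg fun i _ => abs_nonneg _) hx
    · have := Finset.single_le_sum (f := fun i => |x i|)
        (fun j _ => abs_nonneg _) (Finset.mem_univ i)
      simpa [Real.norm_eq_abs] using this.trans hx
  exact (isCompact_closedBall 0 ρ).of_isClosed_subset (Sball_closed N ρ) hb

lemma Sball_integrableOn {N : ℕ} {ρ : ℝ} {f : (Fin N → ℝ) → ℝ} (hf : Continuous f) :
    IntegrableOn f (Sball N ρ) :=
  hf.continuousOn.integrableOn_compact (Sball_compact N ρ)

lemma Sball_fubini (N : ℕ) (ρ : ℝ) (i : Fin (N + 1)) (f : (Fin (N + 1) → ℝ) → ℝ)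
    (hf : Continuous f) :
    ∫ x in Sball (N + 1) ρ, f x
      = ∫ t : ℝ, ∫ x in Sball N (ρ - |t|), f (i.insertNth t x) := by
  have hmp := (measurePreserving_piFinSuccAbove (fun _ : Fin (N + 1) => (volume : Measure ℝ)) i).symm
  have hint : Integrable (Set.indicator (Sball (N + 1) ρ) f)
      (Measure.pi fun _ : Fin (N + 1) => (volume : Measure ℝ)) := by
    rw [← volume_pi]
    exact (integrable_indicator_iff (Sball_meas _ _)).2 (Sball_integrableOn hf)
  have hint2 : Integrable (fun z : ℝ × (Fin N → ℝ) => (Set.indicator (Sball (N + 1) ρ) f)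
      ((MeasurableEquiv.piFinSuccAbove (fun _ : Fin (N + 1) => ℝ) i).symm z))
      ((volume : Measure ℝ).prod (Measure.pi fun _ : Fin N => (volume : Measure ℝ))) :=
    (hmp.integrable_comp_emb (MeasurableEquiv.measurableEmbedding _)).2 hint
  have h2 : ∀ z : ℝ × (Fin N → ℝ),
      (Set.indicator (Sball (N + 1) ρ) f)
          ((MeasurableEquiv.piFinSuccAbove (fun _ : Fin (N + 1) => ℝ) i).symm z)
        = Set.indicator (Sball N (ρ - |z.1|)) (fun x => f (i.insertNth z.1 x)) z.2 := by
    intro z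
    have hmem : (i.insertNth z.1 z.2 ∈ Sball (N + 1) ρ) ↔ z.2 ∈ Sball N (ρ - |z.1|) := by
      simp only [Sball, Set.mem_setOf_eq, Fin.sum_univ_succAbove _ i,
        Fin.insertNth_apply_same, Fin.insertNth_apply_succAbove]
      constructor <;> intro h <;> linarith
    simp only [MeasurableEquiv.piFinSuccAbove_symm_apply]
    rw [show ((Fin.insertNthEquiv (fun _ : Fin (N + 1) => ℝ) i) z) = i.insertNth z.1 z.2 from rfl]
    by_cases h : z.2 ∈ Sball N (ρ - |z.1|)
    · rw [Set.indicator_of_mem (hmem.2 h), Set.indicator_of_mem h]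
    · rw [Set.indicator_of_notMem (fun hc => h (hmem.1 hc)), Set.indicator_of_notMem h]
  rw [← integral_indicator (Sball_meas _ _), volume_pi, ← hmp.integral_comp',
    MeasureTheory.integral_prod _ hint2]
  congr 1
  funext t
  simp only [h2]
  rw [← volume_pi]
  exact integral_indicator (Sball_meas _ _)

lemma Sball_empty {N : ℕ} {ρ : ℝ} (hρ : ρ < 0) : Sball N ρ = ∅ := by
  ext x
  simp only [Sball, Set.mem_setOf_eq, Set.mem_empty_iff_false, iff_false, not_le]
  exact lt_of_lt_of_le hρ (Finset.sum_nonneg fun i _ => abs_nonneg _)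

lemma integral_symm_half {g : ℝ → ℝ} (hg : Continuous g) {ρ : ℝ} (hρ : 0 ≤ ρ) :
    ∫ t in (-ρ)..ρ, g |t| = 2 * ∫ t in (0:ℝ)..ρ, g t := by
  have hgi : Continuous fun t => g |t| := hg.comp continuous_abs
  have h1 : ∫ t in (-ρ)..(0:ℝ), g |t| = ∫ t in (0:ℝ)..ρ, g |(-t)| := by
    rw [intervalIntegral.integral_comp_neg (fun t => g |t|)]
    simp
  have h2 : (∫ t in (-ρ)..(0:ℝ), g |t|) + ∫ t in (0:ℝ)..ρ, g |t| = ∫ t in (-ρ)..ρ, g |t| :=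
    intervalIntegral.integral_add_adjacent_intervals
      (hgi.intervalIntegrable _ _) (hgi.intervalIntegrable _ _)
  have h3 : ∫ t in (0:ℝ)..ρ, g |t| = ∫ t in (0:ℝ)..ρ, g t := by
    apply intervalIntegral.integral_congr
    intro t ht
    rw [Set.uIcc_of_le hρ] at ht
    show g |t| = g t
    rw [abs_of_nonneg ht.1]
  rw [← h2, h1, h3]
  have : ∀ t : ℝ, g |(-t)| = g |t| := fun t => by rw [abs_neg]
  simp only [this, h3]
  ring

lemma Sball_vol : ∀ (N : ℕ) (ρ : ℝ), 0 ≤ ρ →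
    (∫ x in Sball N ρ, (1:ℝ)) = (2*ρ)^N / N.factorial := by
  intro N
  induction N with
  | zero =>
    intro ρ hρ
    have : Sball 0 ρ = Set.univ := by
      ext x; simp [Sball, hρ]
    rw [this]
    simp only [Measure.restrict_univ, pow_zero, Nat.factorial_zero, Nat.cast_one, div_one,
      MeasureTheory.integral_const, smul_eq_mul, mul_one]
    rw [volume_pi, measureReal_def, Measure.pi_univ]
    simp
  | succ N ih =>
    intro ρ hρ
    rw [Sball_fubini N ρ 0 _ continuous_const]
    have hpt : ∀ t : ℝ, (∫ x in Sball N (ρ - |t|), (1:ℝ))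
        = Set.indicator (Set.Icc (-ρ) ρ) (fun t => (2*(ρ-|t|))^N / N.factorial) t := by
      intro t
      by_cases ht : |t| ≤ ρ
      · rw [Set.indicator_of_mem (by rw [Set.mem_Icc, ← abs_le]; exact ht),
          ih _ (by linarith)]
      · rw [Sball_empty (by push_neg at ht; linarith), Set.indicator_of_notMem
          (by rw [Set.mem_Icc, ← abs_le]; exact ht)]
        simp
    simp only [hpt]
    rw [integral_indicator measurableSet_Icc, MeasureTheory.integral_Icc_eq_integral_Ioc,
      ← intervalIntegral.integral_of_le (by linarith)]
    have hcont : Continuous fun u : ℝ => (2*(ρ-u))^N / N.factorial := by fun_prop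
    rw [integral_symm_half hcont hρ]
    have hsub : ∫ t in (0:ℝ)..ρ, (2*(ρ-t))^N / N.factorial
        = ∫ t in (0:ℝ)..ρ, (2*t)^N / N.factorial := by
      have := intervalIntegral.integral_comp_sub_left
        (fun u : ℝ => (2*u)^N / N.factorial) ρ (a := 0) (b := ρ)
      simpa using this
    rw [hsub]
    have : ∀ t : ℝ, (2*t)^N / N.factorial = (2^N / N.factorial) * t^N := by
      intro t; rw [mul_pow]; ring
    simp only [this]
    rw [intervalIntegral.integral_const_mul, integral_pow]
    have hfac : ((N+1).factorial : ℝ) = (N+1) * N.factorial := by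
      rw [Nat.factorial_succ]; push_cast; ring
    have h1 : (N.factorial : ℝ) ≠ 0 := Nat.cast_ne_zero.2 (Nat.factorial_ne_zero N)
    have h2 : ((N:ℝ)+1) ≠ 0 := by positivity
    rw [hfac]
    push_cast
    field_simp
    ring

lemma beta_int (N : ℕ) (ρ : ℝ) :
    ∫ t in (0:ℝ)..ρ, t^2*(ρ-t)^N = 2*ρ^(N+3)/(((N:ℝ)+1)*((N:ℝ)+2)*((N:ℝ)+3)) := by
  have hsub : ∫ t in (0:ℝ)..ρ, t^2*(ρ-t)^N = ∫ u in (0:ℝ)..ρ, (ρ-u)^2*u^N := by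
    have := intervalIntegral.integral_comp_sub_left
      (fun u : ℝ => (ρ-u)^2*u^N) ρ (a := 0) (b := ρ)
    simp only [sub_zero, sub_self] at this
    rw [← this]
    apply intervalIntegral.integral_congr
    intro t _
    show t^2*(ρ-t)^N = (ρ-(ρ-t))^2*(ρ-t)^N
    ring_nf
  rw [hsub]
  have hexp : ∀ u : ℝ, (ρ-u)^2*u^N = ρ^2*u^N - 2*ρ*u^(N+1) + u^(N+2) := by
    intro u; ring
  simp only [hexp]
  rw [intervalIntegral.integral_add (by apply Continuous.intervalIntegrable; fun_prop)
      (by apply Continuous.intervalIntegrable; fun_prop),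
    intervalIntegral.integral_sub (by apply Continuous.intervalIntegrable; fun_prop)
      (by apply Continuous.intervalIntegrable; fun_prop),
    intervalIntegral.integral_const_mul, intervalIntegral.integral_const_mul,
    integral_pow, integral_pow, integral_pow]
  have h1 : ((N:ℝ)+1) ≠ 0 := by positivity
  have h2 : ((N:ℝ)+2) ≠ 0 := by positivity
  have h3 : ((N:ℝ)+3) ≠ 0 := by positivity
  push_cast
  field_simp
  ring

lemma Sball_mom (N : ℕ) (ρ : ℝ) (hρ : 0 ≤ ρ) (i : Fin (N+1)) :
    ∫ x in Sball (N+1) ρ, (x i)^2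
      = (2*ρ)^(N+1) / (N+1).factorial * (2*ρ^2/(((N:ℝ)+2)*((N:ℝ)+3))) := by
  rw [Sball_fubini N ρ i (fun x => (x i)^2) (by fun_prop)]
  have hpt : ∀ t : ℝ, (∫ x in Sball N (ρ - |t|), (Fin.insertNth (α := fun _ => ℝ) i t x i)^2)
      = Set.indicator (Set.Icc (-ρ) ρ) (fun t => (2*(ρ-|t|))^N / N.factorial * |t|^2) t := by
    intro t
    have happ : ∀ x : Fin N → ℝ, Fin.insertNth (α := fun _ => ℝ) i t x i = t := fun x => Fin.insertNth_apply_same (α := fun _ => ℝ) i t x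
    simp only [happ]
    by_cases ht : |t| ≤ ρ
    · rw [Set.indicator_of_mem (by rw [Set.mem_Icc, ← abs_le]; exact ht)]
      rw [MeasureTheory.setIntegral_const, smul_eq_mul]
      have hv : (volume.real (Sball N (ρ - |t|))) = (2*(ρ-|t|))^N / N.factorial := by
        have := Sball_vol N (ρ - |t|) (by linarith)
        rwa [MeasureTheory.setIntegral_const, smul_eq_mul, mul_one] at this
      rw [hv, sq_abs]
    · rw [Sball_empty (by push_neg at ht; linarith), Set.indicator_of_notMem
        (by rw [Set.mem_Icc, ← abs_le]; exact ht)]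
      simp
  simp only [hpt]
  rw [integral_indicator measurableSet_Icc, MeasureTheory.integral_Icc_eq_integral_Ioc,
    ← intervalIntegral.integral_of_le (by linarith)]
  have hcont : Continuous fun u : ℝ => (2*(ρ-u))^N / N.factorial * u^2 := by fun_prop
  rw [integral_symm_half hcont hρ]
  have hre : ∀ t : ℝ, (2*(ρ-t))^N / N.factorial * t^2 = (2^N/N.factorial) * (t^2*(ρ-t)^N) := by
    intro t; rw [mul_pow]; ring
  simp only [hre]
  rw [intervalIntegral.integral_const_mul, beta_int]
  have hfac : (((N+1)).factorial : ℝ) = ((N:ℝ)+1) * N.factorial := by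
    rw [Nat.factorial_succ]; push_cast; ring
  have h0 : (N.factorial : ℝ) ≠ 0 := Nat.cast_ne_zero.2 (Nat.factorial_ne_zero N)
  have h1 : ((N:ℝ)+1) ≠ 0 := by positivity
  have h2 : ((N:ℝ)+2) ≠ 0 := by positivity
  have h3 : ((N:ℝ)+3) ≠ 0 := by positivity
  rw [hfac]
  push_cast
  field_simp
  ring

lemma flatten (K : ℕ) : ∀ (m : ℕ), ∃ (M : ℕ), M = m * K ∧
    ∃ e : (Fin m → Fin K → ℝ) ≃ᵐ (Fin M → ℝ),
      MeasurePreserving e volume volume ∧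
      (∀ Δ : Fin m → Fin K → ℝ, ∑ i, |e Δ i| = ∑ a, ∑ b, |Δ a b|) ∧
      (∀ (a : Fin m) (b : Fin K), ∃ i : Fin M, ∀ Δ : Fin m → Fin K → ℝ, e Δ i = Δ a b) := by
  intro m
  induction m with
  | zero =>
    refine ⟨0, by simp, (MeasurableEquiv.ofUniqueOfUnique _ Unit).trans
      (MeasurableEquiv.ofUniqueOfUnique _ Unit).symm, ?_, ?_, ?_⟩
    · exact ((volume_preserving_pi_empty (fun _ : Fin 0 => ℝ)).symm _).comp
        (volume_preserving_pi_empty (fun _ : Fin 0 => (Fin K → ℝ)))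
    · intro Δ; simp
    · exact fun a => a.elim0
  | succ m ih =>
    obtain ⟨M, hM, e, hMP, hsum, hcoord⟩ := ih
    refine ⟨K + M, by subst hM; ring, ?_⟩
    set φ := MeasurableEquiv.piFinSuccAbove (fun _ : Fin (m+1) => (Fin K → ℝ)) 0 with hφ
    set ψ := (MeasurableEquiv.sumPiEquivProdPi (fun _ : Fin K ⊕ Fin M => ℝ)).symm with hψ
    set χ := MeasurableEquiv.piCongrLeft (fun _ : Fin (K+M) => ℝ) finSumFinEquiv with hχ
    set E := (φ.trans ((MeasurableEquiv.refl (Fin K → ℝ)).prodCongr e)).trans (ψ.trans χ) with hE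
    have hEapp : ∀ (Δ : Fin (m+1) → Fin K → ℝ) (j : Fin K ⊕ Fin M),
        E Δ (finSumFinEquiv j) = Sum.elim (fun b => Δ 0 b)
          (fun i => e (fun a => Δ a.succ) i) j := by
      intro Δ j
      have : E Δ (finSumFinEquiv j) = χ (ψ (φ Δ |>.1, e (φ Δ).2)) (finSumFinEquiv j) := rfl
      rw [this]
      have hχapp : ∀ (g : Fin K ⊕ Fin M → ℝ) (j), χ g (finSumFinEquiv j) = g j := by
        intro g j
        rw [hχ, MeasurableEquiv.coe_piCongrLeft, Equiv.piCongrLeft_apply_apply]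
      rw [hχapp]
      have hrow : (fun j => Δ ((0 : Fin (m+1)).succAbove j)) = fun a : Fin m => Δ a.succ :=
        funext fun a => by rw [Fin.zero_succAbove]
      cases j with
      | inl b => rfl
      | inr i =>
        show e (fun j => Δ ((0 : Fin (m+1)).succAbove j)) i = _
        rw [hrow]
        rfl
    refine ⟨E, ?_, ?_, ?_⟩
    · have h1 := volume_preserving_piFinSuccAbove (fun _ : Fin (m+1) => (Fin K → ℝ)) 0
      have h2 : MeasurePreserving (Prod.map (id : (Fin K → ℝ) → (Fin K → ℝ)) e) :=
        (MeasurePreserving.id volume).prod hMP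
      have h3 := volume_measurePreserving_sumPiEquivProdPi_symm (fun _ : Fin K ⊕ Fin M => ℝ)
      have h4 := volume_measurePreserving_piCongrLeft (fun _ : Fin (K+M) => ℝ) finSumFinEquiv
      have : ⇑E = ⇑χ ∘ ⇑ψ ∘ (Prod.map id ⇑e) ∘ ⇑φ := rfl
      rw [this]
      exact ((h4.comp h3).comp h2).comp h1
    · intro Δ
      rw [← Equiv.sum_comp finSumFinEquiv (fun i => |E Δ i|)]
      simp only [hEapp]
      rw [Fintype.sum_sum_type]
      simp only [Sum.elim_inl, Sum.elim_inr]
      rw [hsum (fun a => Δ a.succ), Fin.sum_univ_succ (fun a => ∑ b, |Δ a b|)]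
    · intro a b
      refine Fin.cases ?_ ?_ a
      · exact ⟨finSumFinEquiv (Sum.inl b), fun Δ => by rw [hEapp]; rfl⟩
      · intro a'
        obtain ⟨i', hi'⟩ := hcoord a' b
        exact ⟨finSumFinEquiv (Sum.inr i'), fun Δ => by rw [hEapp]; exact hi' _⟩

section Wside

variable {n k : ℕ} {ρ : ℝ}

def Wball (n k : ℕ) (ρ : ℝ) : Set (Fin n → Fin k → ℝ) := {Δ | ∑ a, ∑ b, |Δ a b| ≤ ρ}

lemma Wball_closed : IsClosed (Wball n k ρ) := by
  have : Continuous fun Δ : Fin n → Fin k → ℝ => ∑ a, ∑ b, |Δ a b| := by fun_prop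
  exact isClosed_le this continuous_const

lemma Wball_meas : MeasurableSet (Wball n k ρ) := Wball_closed.measurableSet

lemma Wball_compact : IsCompact (Wball n k ρ) := by
  have hb : Wball n k ρ ⊆ Metric.closedBall 0 ρ := by
    intro Δ hΔ
    have hnn : (0:ℝ) ≤ ρ := by
      refine le_trans ?_ hΔ
      positivity
    simp only [Metric.mem_closedBall, dist_zero_right]
    refine (pi_norm_le_iff_of_nonneg hnn).2 fun a => ?_
    refine (pi_norm_le_iff_of_nonneg hnn).2 fun b => ?_
    have h1 : |Δ a b| ≤ ∑ b', |Δ a b'| :=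
      Finset.single_le_sum (f := fun b' => |Δ a b'|) (fun j _ => abs_nonneg _) (Finset.mem_univ b)
    have h2 : ∑ b', |Δ a b'| ≤ ∑ a', ∑ b', |Δ a' b'| :=
      Finset.single_le_sum (f := fun a' => ∑ b', |Δ a' b'|)
        (fun j _ => Finset.sum_nonneg fun _ _ => abs_nonneg _) (Finset.mem_univ a)
    simpa [Real.norm_eq_abs] using (h1.trans (h2.trans hΔ))
  exact (isCompact_closedBall 0 ρ).of_isClosed_subset Wball_closed hb

lemma Wball_integrableOn {f : (Fin n → Fin k → ℝ) → ℝ} (hf : Continuous f) :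
    IntegrableOn f (Wball n k ρ) :=
  hf.continuousOn.integrableOn_compact Wball_compact

def negAtFun (a₀ : Fin n) (b₀ : Fin k) (Δ : Fin n → Fin k → ℝ) : Fin n → Fin k → ℝ :=
  fun a b => if a = a₀ ∧ b = b₀ then -Δ a b else Δ a b

lemma negAtFun_invol (a₀ : Fin n) (b₀ : Fin k) (Δ : Fin n → Fin k → ℝ) :
    negAtFun a₀ b₀ (negAtFun a₀ b₀ Δ) = Δ := by
  funext a b
  by_cases h : a = a₀ ∧ b = b₀ <;> simp [negAtFun, h]

lemma negAtFun_cont (a₀ : Fin n) (b₀ : Fin k) : Continuous (negAtFun a₀ b₀ (n := n) (k := k)) := by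
  apply continuous_pi; intro a; apply continuous_pi; intro b
  by_cases h : a = a₀ ∧ b = b₀
  · simp only [negAtFun, if_pos h]; fun_prop
  · simp only [negAtFun, if_neg h]; fun_prop

lemma negAtFun_meas (a₀ : Fin n) (b₀ : Fin k) : Measurable (negAtFun a₀ b₀ (n := n) (k := k)) :=
  (negAtFun_cont a₀ b₀).measurable

def negAtEquiv (a₀ : Fin n) (b₀ : Fin k) : (Fin n → Fin k → ℝ) ≃ᵐ (Fin n → Fin k → ℝ) where
  toEquiv := ⟨negAtFun a₀ b₀, negAtFun a₀ b₀, negAtFun_invol a₀ b₀, negAtFun_invol a₀ b₀⟩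
  measurable_toFun := negAtFun_meas a₀ b₀
  measurable_invFun := negAtFun_meas a₀ b₀

lemma negAt_measurePreserving (a₀ : Fin n) (b₀ : Fin k) :
    MeasurePreserving (negAtFun a₀ b₀ (n := n) (k := k)) volume volume := by
  have hcomp : negAtFun a₀ b₀ (n := n) (k := k)
      = fun Δ a => (fun (v : Fin k → ℝ) => fun b =>
          (fun t : ℝ => if a = a₀ ∧ b = b₀ then -t else t) (v b)) (Δ a) := rfl
  rw [hcomp]
  refine volume_preserving_pi
    (f := fun (a : Fin n) (v : Fin k → ℝ) b => if a = a₀ ∧ b = b₀ then -v b else v b)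
    fun a => ?_
  refine volume_preserving_pi
    (f := fun (b : Fin k) (t : ℝ) => if a = a₀ ∧ b = b₀ then -t else t)
    fun b => ?_
  show MeasurePreserving (fun t : ℝ => if a = a₀ ∧ b = b₀ then -t else t) volume volume
  by_cases h : a = a₀ ∧ b = b₀
  · have : (fun t : ℝ => if a = a₀ ∧ b = b₀ then -t else t) = Neg.neg :=
      funext fun t => if_pos h
    rw [this]
    exact Measure.measurePreserving_neg volume
  · have : (fun t : ℝ => if a = a₀ ∧ b = b₀ then -t else t) = id :=
      funext fun t => if_neg h
    rw [this]
    exact MeasurePreserving.id volume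

lemma Wball_negAt_preimage (a₀ : Fin n) (b₀ : Fin k) :
    negAtFun a₀ b₀ ⁻¹' (Wball n k ρ) = Wball n k ρ := by
  ext Δ
  simp only [Set.mem_preimage, Wball, Set.mem_setOf_eq]
  have : ∀ a b, |negAtFun a₀ b₀ Δ a b| = |Δ a b| := by
    intro a b
    by_cases h : a = a₀ ∧ b = b₀ <;> simp [negAtFun, h]
  simp only [this]

lemma integral_odd_zero (a₀ : Fin n) (b₀ : Fin k) (f : (Fin n → Fin k → ℝ) → ℝ)
    (hodd : ∀ Δ, f (negAtFun a₀ b₀ Δ) = -f Δ) :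
    ∫ Δ in Wball n k ρ, f Δ = 0 := by
  have h1 : ∫ Δ in Wball n k ρ, f Δ = ∫ Δ, Set.indicator (Wball n k ρ) f Δ :=
    (integral_indicator Wball_meas).symm
  have h2 : ∫ Δ, Set.indicator (Wball n k ρ) f Δ
      = ∫ Δ, Set.indicator (Wball n k ρ) f (negAtEquiv a₀ b₀ Δ) :=
    ((negAt_measurePreserving a₀ b₀).integral_comp' (f := negAtEquiv a₀ b₀) _).symm
  have h3 : ∀ Δ, Set.indicator (Wball n k ρ) f (negAtEquiv a₀ b₀ Δ)
      = - Set.indicator (Wball n k ρ) f Δ := by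
    intro Δ
    have hmem : negAtFun a₀ b₀ Δ ∈ Wball n k ρ ↔ Δ ∈ Wball n k ρ := by
      rw [← Set.mem_preimage, Wball_negAt_preimage]
    show Set.indicator (Wball n k ρ) f (negAtFun a₀ b₀ Δ) = _
    by_cases h : Δ ∈ Wball n k ρ
    · rw [Set.indicator_of_mem (hmem.2 h), Set.indicator_of_mem h, hodd]
    · rw [Set.indicator_of_notMem (fun hc => h (hmem.1 hc)), Set.indicator_of_notMem h,
        neg_zero]
  have h4 : ∫ Δ, Set.indicator (Wball n k ρ) f Δ = - ∫ Δ, Set.indicator (Wball n k ρ) f Δ := by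
    conv_lhs => rw [h2]
    simp only [h3]
    exact integral_neg _
  rw [h1]
  linarith [h4]

end Wside

lemma Wball_transfer {n k : ℕ} {ρ : ℝ} {M : ℕ} (e : (Fin n → Fin k → ℝ) ≃ᵐ (Fin M → ℝ))
    (hMP : MeasurePreserving e volume volume)
    (hsum : ∀ Δ : Fin n → Fin k → ℝ, ∑ i, |e Δ i| = ∑ a, ∑ b, |Δ a b|)
    (g : (Fin M → ℝ) → ℝ) :
    ∫ Δ in Wball n k ρ, g (e Δ) = ∫ x in Sball M ρ, g x := by
  rw [← integral_indicator (Sball_meas M ρ), ← hMP.integral_comp' (g := Set.indicator (Sball M ρ) g),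
    ← integral_indicator Wball_meas]
  congr 1
  funext Δ
  have hmem : e Δ ∈ Sball M ρ ↔ Δ ∈ Wball n k ρ := by
    simp only [Sball, Wball, Set.mem_setOf_eq, hsum Δ]
  by_cases h : Δ ∈ Wball n k ρ
  · rw [Set.indicator_of_mem h, Set.indicator_of_mem (hmem.2 h)]
  · rw [Set.indicator_of_notMem h, Set.indicator_of_notMem (fun hc => h (hmem.1 hc))]

lemma part1 (n k : ℕ) (hn : 1 ≤ n) (hk : 1 ≤ k) (ρ : ℝ) (hρ : 0 < ρ)
    (X : Fin n → Fin k → ℝ) (y : Fin n → ℝ) (β : Fin k → ℝ) :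
    ∫ Δ in Wball n k ρ, (∑ a, (y a - ∑ b, (X a b + Δ a b) * β b) ^ 2) =
      ((2 * ρ) ^ (n * k) / (n * k).factorial) *
        ((∑ a, (y a - ∑ b, X a b * β b) ^ 2) +
          (2 * n * ρ ^ 2 / ((n * k + 1) * (n * k + 2))) * ∑ b, (β b) ^ 2) := by
  obtain ⟨M, hM, e, hMP, hsum, hcoord⟩ := flatten k n
  have hρ0 : (0:ℝ) ≤ ρ := hρ.le
  have hc1 : ∀ (a : Fin n) (b : Fin k), Continuous fun Δ : Fin n → Fin k → ℝ => Δ a b :=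
    fun a b => (continuous_apply b).comp (continuous_apply a)
  set r : Fin n → ℝ := fun a => y a - ∑ b, X a b * β b with hr
  set V : ℝ := (2 * ρ) ^ M / M.factorial with hV
  set c : ℝ := 2 * ρ ^ 2 / (((M:ℝ) + 1) * ((M:ℝ) + 2)) with hc
  have hvol : (∫ Δ in Wball n k ρ, (1:ℝ)) = V := by
    have h := Wball_transfer (ρ := ρ) e hMP hsum (fun _ => (1:ℝ))
    rw [show (∫ Δ in Wball n k ρ, (1:ℝ)) = ∫ Δ in Wball n k ρ, (fun _ : Fin M → ℝ => (1:ℝ)) (e Δ)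
      from rfl, h, Sball_vol M ρ hρ0]
  have hWvol : (volume.real (Wball n k ρ)) = V := by
    have h := hvol
    rwa [MeasureTheory.setIntegral_const, smul_eq_mul, mul_one] at h
  have hmom : ∀ (a : Fin n) (b : Fin k), (∫ Δ in Wball n k ρ, (Δ a b)^2) = V * c := by
    intro a b
    obtain ⟨i, hi⟩ := hcoord a b
    obtain ⟨N', hN'⟩ : ∃ N', M = N' + 1 := by
      refine ⟨M - 1, ?_⟩
      have h1 : 1 * 1 ≤ n * k := Nat.mul_le_mul hn hk
      omega
    have h0 : ∀ Δ : Fin n → Fin k → ℝ, (Δ a b)^2 = ((e Δ) i)^2 := fun Δ => by rw [hi Δ]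
    simp only [h0]
    have h := Wball_transfer (ρ := ρ) e hMP hsum (fun x => (x i)^2)
    rw [show (∫ Δ in Wball n k ρ, ((e Δ) i)^2)
        = ∫ Δ in Wball n k ρ, (fun x : Fin M → ℝ => (x i)^2) (e Δ) from rfl, h]
    subst hN'
    rw [Sball_mom N' ρ hρ0 i, hV, hc]
    push_cast
    ring
  have hodd1 : ∀ (a : Fin n) (b : Fin k), (∫ Δ in Wball n k ρ, Δ a b) = 0 := by
    intro a b
    refine integral_odd_zero a b _ fun Δ => ?_
    simp [negAtFun]
  have hodd2 : ∀ (a : Fin n) (b b' : Fin k), b' ≠ b →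
      (∫ Δ in Wball n k ρ, Δ a b * Δ a b') = 0 := by
    intro a b b' hbb
    refine integral_odd_zero a b _ fun Δ => ?_
    have h1 : negAtFun a b Δ a b = -Δ a b := by simp [negAtFun]
    have h2 : negAtFun a b Δ a b' = Δ a b' := by
      simp [negAtFun, hbb]
    rw [h1, h2]
    ring
  have hstep : ∀ Δ : Fin n → Fin k → ℝ, ∑ a, (y a - ∑ b, (X a b + Δ a b) * β b) ^ 2
      = ∑ a, ((r a)^2 - (∑ b, (2 * r a * β b) * Δ a b)
          + ∑ b, ∑ b', (β b * β b') * (Δ a b * Δ a b')) := by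
    intro Δ
    refine Finset.sum_congr rfl fun a _ => ?_
    have h1 : y a - ∑ b, (X a b + Δ a b) * β b = r a - ∑ b, Δ a b * β b := by
      simp only [hr, add_mul, Finset.sum_add_distrib]
      ring
    rw [h1]
    have h2 : (∑ b, Δ a b * β b)^2 = ∑ b, ∑ b', (β b * β b') * (Δ a b * Δ a b') := by
      rw [sq, Finset.sum_mul_sum]
      exact Finset.sum_congr rfl fun b _ => Finset.sum_congr rfl fun b' _ => by ring
    have h3 : ∑ b, (2 * r a * β b) * Δ a b = 2 * r a * (∑ b, Δ a b * β b) := by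
      rw [Finset.mul_sum]
      exact Finset.sum_congr rfl fun b _ => by ring
    rw [h3, ← h2]
    ring
  simp only [hstep]
  have hcont2 : ∀ a : Fin n, Continuous fun Δ : Fin n → Fin k → ℝ =>
      ∑ b, (2 * r a * β b) * Δ a b :=
    fun a => continuous_finset_sum _ fun b _ => (continuous_const.mul (hc1 a b))
  have hcont3 : ∀ a : Fin n, Continuous fun Δ : Fin n → Fin k → ℝ =>
      ∑ b, ∑ b', (β b * β b') * (Δ a b * Δ a b') :=
    fun a => continuous_finset_sum _ fun b _ => continuous_finset_sum _ fun b' _ =>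
      continuous_const.mul ((hc1 a b).mul (hc1 a b'))
  rw [integral_finset_sum _ (f := fun a Δ => (r a)^2 - (∑ b, (2 * r a * β b) * Δ a b)
      + ∑ b, ∑ b', (β b * β b') * (Δ a b * Δ a b')) (fun a _ => Wball_integrableOn
    (((continuous_const.sub (hcont2 a)).add (hcont3 a))))]
  have hsummand : ∀ a : Fin n,
      (∫ Δ in Wball n k ρ, ((r a)^2 - (∑ b, (2 * r a * β b) * Δ a b)
          + ∑ b, ∑ b', (β b * β b') * (Δ a b * Δ a b')))
        = V * (r a)^2 + (∑ b, (β b)^2) * (V * c) := by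
    intro a
    have i1 : IntegrableOn (fun _ : Fin n → Fin k → ℝ => (r a)^2) (Wball n k ρ) :=
      Wball_integrableOn continuous_const
    have i2 : IntegrableOn (fun Δ : Fin n → Fin k → ℝ => ∑ b, (2 * r a * β b) * Δ a b)
        (Wball n k ρ) := Wball_integrableOn (hcont2 a)
    have i12 : IntegrableOn (fun Δ : Fin n → Fin k → ℝ =>
        (r a)^2 - ∑ b, (2 * r a * β b) * Δ a b) (Wball n k ρ) :=
      Wball_integrableOn (continuous_const.sub (hcont2 a))
    have i3 : IntegrableOn (fun Δ : Fin n → Fin k → ℝ =>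
        ∑ b, ∑ b', (β b * β b') * (Δ a b * Δ a b')) (Wball n k ρ) :=
      Wball_integrableOn (hcont3 a)
    rw [integral_add i12 i3, integral_sub i1 i2]
    have e1 : (∫ _ in Wball n k ρ, (r a)^2) = V * (r a)^2 := by
      rw [MeasureTheory.setIntegral_const, smul_eq_mul, hWvol]
    have e2 : (∫ Δ in Wball n k ρ, ∑ b, (2 * r a * β b) * Δ a b) = 0 := by
      rw [integral_finset_sum _ (f := fun b Δ => (2 * r a * β b) * Δ a b)
        (fun b _ => Wball_integrableOn (by fun_prop))]
      refine Finset.sum_eq_zero fun b _ => ?_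
      rw [MeasureTheory.integral_const_mul, hodd1 a b, mul_zero]
    have e3 : (∫ Δ in Wball n k ρ, ∑ b, ∑ b', (β b * β b') * (Δ a b * Δ a b'))
        = (∑ b, (β b)^2) * (V * c) := by
      rw [integral_finset_sum _ (f := fun b Δ => ∑ b', (β b * β b') * (Δ a b * Δ a b'))
        (fun b _ => Wball_integrableOn
        (continuous_finset_sum _ fun b' _ => continuous_const.mul ((hc1 a b).mul (hc1 a b'))))]
      rw [Finset.sum_mul]
      refine Finset.sum_congr rfl fun b _ => ?_
      rw [integral_finset_sum _ (f := fun b' Δ => (β b * β b') * (Δ a b * Δ a b'))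
        (fun b' _ => Wball_integrableOn
        (continuous_const.mul ((hc1 a b).mul (hc1 a b'))))]
      have hinner : ∀ b' : Fin k, (∫ Δ in Wball n k ρ, (β b * β b') * (Δ a b * Δ a b'))
          = if b' = b then (β b)^2 * (V * c) else 0 := by
        intro b'
        rw [MeasureTheory.integral_const_mul]
        by_cases hbb : b' = b
        · subst hbb
          rw [if_pos rfl]
          have : ∀ Δ : Fin n → Fin k → ℝ, Δ a b' * Δ a b' = (Δ a b')^2 := fun Δ => (sq _).symm
          simp only [this]
          rw [hmom a b']
          ring
        · rw [if_neg hbb, hodd2 a b b' hbb, mul_zero]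
      simp only [hinner]
      rw [Finset.sum_ite_eq' Finset.univ b (fun _ => (β b)^2 * (V * c))]
      simp
    rw [e1, e2, e3]
    ring
  simp only [hsummand]
  rw [Finset.sum_add_distrib, Finset.sum_const, ← Finset.mul_sum, Finset.card_univ,
    Fintype.card_fin, nsmul_eq_mul]
  subst hM
  rw [← hV]
  have hre : ∀ a, y a - ∑ b, X a b * β b = r a := fun a => by rw [hr]
  simp only [hre]
  clear_value V
  clear_value r
  have hden : ((n:ℝ) * k + 1) * ((n:ℝ) * k + 2) ≠ 0 := by positivity
  rw [hc]
  push_cast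
  field_simp

end

theorem averaged_robust_diamond (n k : ℕ) (hn : 1 ≤ n) (hk : 1 ≤ k)
    (ρ : ℝ) (hρ : 0 < ρ) (X : Fin n → Fin k → ℝ) (y : Fin n → ℝ)
    (U : Set (Fin n → Fin k → ℝ))
    (hU : U = {Δ | ∑ a, ∑ b, |Δ a b| ≤ ρ}) :
    (∀ β : Fin k → ℝ,
      ∫ Δ in U, (∑ a, (y a - ∑ b, (X a b + Δ a b) * β b) ^ 2) =
        ((2 * ρ) ^ (n * k) / (n * k).factorial) *
          ((∑ a, (y a - ∑ b, X a b * β b) ^ 2) +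
            (2 * n * ρ ^ 2 / ((n * k + 1) * (n * k + 2))) * ∑ b, (β b) ^ 2)) ∧
    (∀ β : Fin k → ℝ,
      (∀ β' : Fin k → ℝ,
        (∫ Δ in U, (∑ a, (y a - ∑ b, (X a b + Δ a b) * β b) ^ 2)) ≤
          ∫ Δ in U, (∑ a, (y a - ∑ b, (X a b + Δ a b) * β' b) ^ 2)) ↔
      (∀ β' : Fin k → ℝ,
        (∑ a, (y a - ∑ b, X a b * β b) ^ 2) +
            (2 * n * ρ ^ 2 / ((n * k + 1) * (n * k + 2))) * ∑ b, (β b) ^ 2 ≤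
          (∑ a, (y a - ∑ b, X a b * β' b) ^ 2) +
            (2 * n * ρ ^ 2 / ((n * k + 1) * (n * k + 2))) * ∑ b, (β' b) ^ 2)) := by
  have hUW : U = Wball n k ρ := hU
  subst hUW
  have hp : ∀ β : Fin k → ℝ,
      ∫ Δ in Wball n k ρ, (∑ a, (y a - ∑ b, (X a b + Δ a b) * β b) ^ 2) =
        ((2 * ρ) ^ (n * k) / (n * k).factorial) *
          ((∑ a, (y a - ∑ b, X a b * β b) ^ 2) +
            (2 * n * ρ ^ 2 / ((n * k + 1) * (n * k + 2))) * ∑ b, (β b) ^ 2) :=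
    fun β => part1 n k hn hk ρ hρ X y β
  have hC : (0:ℝ) < (2 * ρ) ^ (n * k) / (n * k).factorial :=
    div_pos (pow_pos (by linarith) _) (Nat.cast_pos.2 (Nat.factorial_pos _))
  refine ⟨hp, fun β => ?_⟩
  constructor
  · intro h β'
    have h1 := h β'
    rw [hp β, hp β'] at h1
    exact le_of_mul_le_mul_left h1 hC
  · intro h β'
    rw [hp β, hp β']
    exact mul_le_mul_of_nonneg_left (h β') hC.le
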